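/- Newton's inequality: for real numbers λ₁,…,λₙ and 1 ≤ r ≤ n−1, H_r² ≥ H_{r−1} H_{r+1}, where H_k = σ_k/C(n,k); equality for positive λ_i holds if and only if λ₁ = ⋯ = λₙ. -/

import Mathlib

/-- The `r`-th elementary symmetric polynomial of `λ₁,…,λₙ`. -/
noncomputable def esymm {n : ℕ} (lam : Fin n → ℝ) (r : ℕ) : ℝ :=
  ∑ t ∈ Finset.powersetCard r (Finset.univ : Finset (Fin n)), ∏ i ∈ t, lam i

/-- The normalized symmetric function `H_r = σ_r / C(n,r)`. -/
noncomputable def Hmean {n : ℕ} (lam : Fin n → ℝ) (r : ℕ) : ℝ :=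
  esymm lam r / (n.choose r : ℝ)




open Finset Polynomial

lemma esymm_zero {n : ℕ} (lam : Fin n → ℝ) : esymm lam 0 = 1 := by
  simp [esymm]

lemma esymm_one {n : ℕ} (lam : Fin n → ℝ) : esymm lam 1 = ∑ i, lam i := by
  simp [esymm, Finset.powersetCard_one, Finset.sum_map]

lemma esymm_top {n : ℕ} (lam : Fin n → ℝ) : esymm lam n = ∏ i, lam i := by
  have h := Finset.powersetCard_self (Finset.univ : Finset (Fin n))
  rw [Finset.card_univ, Fintype.card_fin] at h
  rw [esymm, h, Finset.sum_singleton]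

lemma Hmean_zero {n : ℕ} (lam : Fin n → ℝ) : Hmean lam 0 = 1 := by
  simp [Hmean, esymm_zero]

-- 2*e2 identity over a general finset
lemma two_mul_esymm_two {ι : Type*} [DecidableEq ι] (s : Finset ι) (x : ι → ℝ) :
    2 * ∑ t ∈ s.powersetCard 2, ∏ i ∈ t, x i
      = (∑ i ∈ s, x i) ^ 2 - ∑ i ∈ s, x i ^ 2 := by
  induction s using Finset.induction with
  | empty =>
    rw [show (2:ℕ) = Finset.card (∅ : Finset ι) + 2 from rfl,
      Finset.powersetCard_card_add _ (by norm_num)]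
    simp
  | @insert a s ha ih =>
    have hdisj : Disjoint (s.powersetCard 2) ((s.powersetCard 1).image (insert a)) := by
      rw [Finset.disjoint_left]
      intro t ht hmem
      rw [Finset.mem_powersetCard] at ht
      rw [Finset.mem_image] at hmem
      obtain ⟨u, hu, rfl⟩ := hmem
      exact ha (ht.1 (Finset.mem_insert_self a u))
    have hinj : Set.InjOn (insert a) ((s.powersetCard 1 : Finset (Finset ι)) : Set (Finset ι)) := by
      intro u hu v hv huv
      rw [Finset.mem_coe, Finset.mem_powersetCard] at hu hv
      have hau : a ∉ u := fun h => ha (hu.1 h)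
      have hav : a ∉ v := fun h => ha (hv.1 h)
      rw [← Finset.erase_insert hau, ← Finset.erase_insert hav, huv]
    rw [show (2:ℕ) = Nat.succ 1 from rfl, Finset.powersetCard_succ_insert ha,
      Finset.sum_union hdisj, Finset.sum_image (fun u hu v hv h => hinj hu hv h),
      Finset.sum_insert ha, Finset.sum_insert ha]
    have h1 : ∀ t ∈ s.powersetCard 1, ∏ i ∈ insert a t, x i = x a * ∏ i ∈ t, x i := by
      intro t ht
      rw [Finset.mem_powersetCard] at ht
      exact Finset.prod_insert (fun hmem => ha (ht.1 hmem))
    rw [Finset.sum_congr rfl h1, ← Finset.mul_sum]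
    have h2 : ∑ t ∈ s.powersetCard 1, ∏ i ∈ t, x i = ∑ i ∈ s, x i := by
      simp [Finset.powersetCard_one, Finset.sum_map]
    rw [h2]
    linear_combination ih


lemma two_mul_esymm_two' {n : ℕ} (x : Fin n → ℝ) :
    2 * esymm x 2 = (∑ i, x i) ^ 2 - ∑ i, x i ^ 2 := by
  rw [esymm]
  exact two_mul_esymm_two Finset.univ x

lemma sq_sum_identity {n : ℕ} (x : Fin n → ℝ) :
    2 * ((n : ℝ) * ∑ i, x i ^ 2 - (∑ i, x i) ^ 2) = ∑ i, ∑ j, (x i - x j) ^ 2 := by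
  have h : ∀ i : Fin n, ∑ j, (x i - x j) ^ 2
      = (n : ℝ) * x i ^ 2 - 2 * x i * (∑ j, x j) + ∑ j, x j ^ 2 := by
    intro i
    have e : ∀ j : Fin n, (x i - x j) ^ 2 = x i ^ 2 - 2 * x i * x j + x j ^ 2 :=
      fun j => by ring
    rw [Finset.sum_congr rfl fun j _ => e j, Finset.sum_add_distrib, Finset.sum_sub_distrib,
      Finset.sum_const, Finset.card_univ, Fintype.card_fin, nsmul_eq_mul, ← Finset.mul_sum]
  rw [Finset.sum_congr rfl fun i _ => h i, Finset.sum_add_distrib, Finset.sum_sub_distrib,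
    Finset.sum_const, Finset.card_univ, Fintype.card_fin, nsmul_eq_mul,
    ← Finset.mul_sum, ← Finset.sum_mul]
  simp only [← Finset.mul_sum]
  ring

lemma D_nonneg {n : ℕ} (x : Fin n → ℝ) : 0 ≤ (n : ℝ) * ∑ i, x i ^ 2 - (∑ i, x i) ^ 2 := by
  nlinarith [sq_sum_identity x, Finset.sum_nonneg (fun i (_ : i ∈ Finset.univ) =>
    Finset.sum_nonneg (fun j (_ : j ∈ (Finset.univ : Finset (Fin n))) => sq_nonneg (x i - x j)))]

lemma D_eq_zero_iff {n : ℕ} (x : Fin n → ℝ) :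
    (n : ℝ) * ∑ i, x i ^ 2 - (∑ i, x i) ^ 2 = 0 ↔ ∀ i j, x i = x j := by
  constructor
  · intro h
    have h2 : ∑ i, ∑ j, (x i - x j) ^ 2 = 0 := by
      rw [← sq_sum_identity x, h]; ring
    intro i j
    have hnn : ∀ i ∈ (Finset.univ : Finset (Fin n)), 0 ≤ ∑ j, (x i - x j) ^ 2 :=
      fun i _ => Finset.sum_nonneg fun j _ => sq_nonneg _
    have hi := (Finset.sum_eq_zero_iff_of_nonneg hnn).1 h2 i (Finset.mem_univ i)
    have hij := (Finset.sum_eq_zero_iff_of_nonneg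
      (fun j _ => sq_nonneg (x i - x j))).1 hi j (Finset.mem_univ j)
    have := sq_eq_zero_iff.1 hij
    linarith
  · intro h
    rcases Nat.eq_zero_or_pos n with hn | hn
    · subst hn; simp
    · have c := x ⟨0, hn⟩
      have hx : ∀ i, x i = x ⟨0, hn⟩ := fun i => h i _
      simp only [fun i : Fin n => hx i]
      rw [Finset.sum_const, Finset.sum_const, Finset.card_univ, Fintype.card_fin,
        nsmul_eq_mul, nsmul_eq_mul]
      ring

lemma choose_two_cast {n : ℕ} : (n.choose 2 : ℝ) = (n : ℝ) * ((n : ℝ) - 1) / 2 := by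
  rcases Nat.eq_zero_or_pos n with hn | hn
  · subst hn; norm_num
  have h : 2 * n.choose 2 = n * (n - 1) := by
    rw [Nat.choose_two_right, Nat.mul_div_cancel']
    rcases Nat.even_or_odd n with he | ho
    · exact Dvd.dvd.mul_right he.two_dvd _
    · exact Dvd.dvd.mul_left (Nat.Odd.sub_odd ho odd_one).two_dvd _
  have hc : ((2 * n.choose 2 : ℕ) : ℝ) = ((n * (n - 1) : ℕ) : ℝ) := by rw [h]
  push_cast [Nat.cast_sub hn] at hc
  linarith

lemma var_identity {n : ℕ} (hn : 2 ≤ n) (x : Fin n → ℝ) :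
    Hmean x 1 ^ 2 - Hmean x 2
      = ((n : ℝ) * ∑ i, x i ^ 2 - (∑ i, x i) ^ 2) / ((n : ℝ) ^ 2 * ((n : ℝ) - 1)) := by
  have hn0 : (n : ℝ) ≠ 0 := by positivity
  have hn1 : (n : ℝ) - 1 ≠ 0 := by
    have : (2 : ℝ) ≤ (n : ℝ) := by exact_mod_cast hn
    linarith
  have he2 : esymm x 2 = ((∑ i, x i) ^ 2 - ∑ i, x i ^ 2) / 2 := by
    have := two_mul_esymm_two' x; linarith
  rw [Hmean, Hmean, esymm_one, he2, Nat.choose_one_right, choose_two_cast]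
  field_simp
  ring

lemma var_le {n : ℕ} (hn : 2 ≤ n) (x : Fin n → ℝ) : Hmean x 2 ≤ Hmean x 1 ^ 2 := by
  have h := var_identity hn x
  have hd := D_nonneg x
  have hpos : (0:ℝ) < (n : ℝ) ^ 2 * ((n : ℝ) - 1) := by
    have : (2 : ℝ) ≤ (n : ℝ) := by exact_mod_cast hn
    nlinarith
  nlinarith [div_nonneg hd hpos.le]

lemma var_eq_iff {n : ℕ} (hn : 2 ≤ n) (x : Fin n → ℝ) :
    Hmean x 1 ^ 2 = Hmean x 2 ↔ ∀ i j, x i = x j := by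
  have h := var_identity hn x
  have hpos : (0:ℝ) < (n : ℝ) ^ 2 * ((n : ℝ) - 1) := by
    have : (2 : ℝ) ≤ (n : ℝ) := by exact_mod_cast hn
    nlinarith
  rw [← D_eq_zero_iff x]
  constructor
  · intro he
    have : ((n : ℝ) * ∑ i, x i ^ 2 - (∑ i, x i) ^ 2) / ((n : ℝ) ^ 2 * ((n : ℝ) - 1)) = 0 := by
      linarith
    field_simp at this
    rw [mul_zero] at this
    exact (div_eq_zero_iff.1 this).resolve_right (by have : (2 : ℝ) ≤ (n : ℝ) := (by exact_mod_cast hn); linarith)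
  · intro hD
    rw [hD] at h
    simp at h
    linarith

lemma var_lt {n : ℕ} (hn : 2 ≤ n) (x : Fin n → ℝ) (hne : ¬ ∀ i j, x i = x j) :
    Hmean x 2 < Hmean x 1 ^ 2 := by
  rcases lt_or_eq_of_le (var_le hn x) with h | h
  · exact h
  · exact absurd ((var_eq_iff hn x).1 h.symm) hne


open Finset Polynomial

lemma esymm_eq_coeff {n : ℕ} (lam : Fin n → ℝ) {k : ℕ} (hk : k ≤ n) :
    (∏ i, (X + C (lam i))).coeff (n - k) = esymm lam k := by
  have h : n - k ≤ (Finset.univ : Finset (Fin n)).card := by simp [Nat.sub_le]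
  rw [Finset.prod_X_add_C_coeff _ lam h, esymm]
  congr 1
  rw [Finset.card_univ, Fintype.card_fin, Nat.sub_sub_self hk]

lemma exists_deriv_reduce {n : ℕ} (lam : Fin (n + 1) → ℝ) :
    ∃ mu : Fin n → ℝ,
      (∀ k, k ≤ n → Hmean lam k = Hmean mu k) ∧
      ((∀ i, 0 < lam i) → ∀ j, 0 < mu j) := by
  classical
  set p : ℝ[X] := ∏ i, (X + C (lam i)) with hp
  have hmono : p.Monic := monic_prod_of_monic _ _ fun i _ => monic_X_add_C (lam i)
  have hdeg : p.natDegree = n + 1 := by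
    rw [hp, natDegree_prod _ _ fun i _ => (monic_X_add_C (lam i)).ne_zero]
    simp [natDegree_X_add_C]
  set q : ℝ[X] := derivative p with hq
  have hqcoeff : ∀ m : ℕ, q.coeff m = p.coeff (m + 1) * (m + 1) := fun m =>
    coeff_derivative p m
  have hqtop : q.coeff n = (n + 1 : ℝ) := by
    rw [hqcoeff, ← hdeg, hmono.coeff_natDegree, one_mul]
  have hq0 : q ≠ 0 := by
    intro h
    rw [h, coeff_zero] at hqtop
    have : ((n : ℝ) + 1) ≠ 0 := by positivity
    exact this hqtop.symm
  have hqdeg : q.natDegree = n := by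
    refine le_antisymm ?_ (le_natDegree_of_ne_zero (hqtop ▸ by positivity))
    have h := natDegree_derivative_le p
    rw [hdeg] at h
    exact h
  -- roots of p
  have hproots : Multiset.card p.roots = n + 1 := by
    have hfac : p = (Multiset.map (fun a => X - C a)
        ((Finset.univ.val : Multiset (Fin (n+1))).map fun i => -lam i)).prod := by
      rw [hp, Finset.prod_eq_multiset_prod, Multiset.map_map]
      congr 1
      refine Multiset.map_congr rfl fun i _ => ?_
      simp [sub_neg_eq_add]
    rw [hfac, roots_multiset_prod_X_sub_C]
    simp
  have hqroots : Multiset.card q.roots = n := by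
    refine le_antisymm (hqdeg ▸ card_roots' q) ?_
    have h := card_roots_le_derivative p
    rw [hproots, ← hq] at h
    omega
  have hsplits : q.Splits := splits_iff_card_roots.2 (by rw [hqroots, hqdeg])
  have hqlead : q.leadingCoeff = (n : ℝ) + 1 := by
    rw [leadingCoeff, hqdeg, hqtop]
  obtain ⟨l, hlist⟩ : ∃ l : List ℝ, q.roots = (l : Multiset ℝ) :=
    ⟨q.roots.toList, (Multiset.coe_toList _).symm⟩
  have hlen : l.length = n := by
    have := hqroots
    rw [hlist] at this
    simpa using this
  subst hlen
  set mu : Fin l.length → ℝ := fun j => - l.get j with hmu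
  have hfact : q = C ((l.length : ℝ) + 1) * ∏ j, (X + C (mu j)) := by
    have h1 := hsplits.eq_prod_roots
    rw [hqlead, hlist] at h1
    rw [h1]
    congr 1
    rw [Finset.prod_eq_multiset_prod, Fin.univ_val_map, Multiset.map_coe]
    congr 1
    rw [Multiset.coe_eq_coe]
    refine List.Perm.of_eq ?_
    have hfg : (fun i : Fin l.length => X - C (l.get i))
        = (fun j : Fin l.length => X + C (mu j)) := by
      funext j
      rw [hmu]
      simp [sub_eq_add_neg]
    calc List.map (fun a => X - C a) l = List.ofFn (fun i : Fin l.length => X - C (l.get i)) := by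
          rw [← List.ofFn_getElem_eq_map]
          rfl
      _ = List.ofFn (fun j : Fin l.length => X + C (mu j)) := by rw [hfg]
  refine ⟨mu, ?_, ?_⟩
  · intro k hk
    have hcoeffq1 : q.coeff (l.length - k) = ((l.length : ℝ) + 1) * esymm mu k := by
      rw [hfact, coeff_C_mul, esymm_eq_coeff mu hk]
    have hcoeffq2 : q.coeff (l.length - k)
        = esymm lam k * (((l.length - k : ℕ) : ℝ) + 1) := by
      rw [hqcoeff]
      have h3 : l.length - k + 1 = (l.length + 1) - k := by omega
      rw [h3]
      rw [show (l.length + 1) - k = (l.length + 1) - k from rfl]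
      have := esymm_eq_coeff lam (show k ≤ l.length + 1 by omega)
      rw [← hp] at this
      rw [this]
    have hsub : (((l.length + 1 - k : ℕ)) : ℝ) = ((l.length - k : ℕ) : ℝ) + 1 := by
      have : l.length + 1 - k = (l.length - k) + 1 := by omega
      rw [this]
      push_cast
      ring
    have hek : ((l.length : ℝ) + 1) * esymm mu k
        = ((l.length + 1 - k : ℕ) : ℝ) * esymm lam k := by
      rw [hsub, ← hcoeffq1, hcoeffq2]
      ring
    have hcast : ((l.length.choose k : ℕ) : ℝ) * ((l.length : ℝ) + 1)
        = (((l.length + 1).choose k : ℕ) : ℝ) * ((l.length + 1 - k : ℕ) : ℝ) := by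
      exact_mod_cast congrArg (Nat.cast : ℕ → ℝ) (Nat.choose_mul_succ_eq l.length k)
    have hc1 : ((l.length + 1).choose k : ℝ) ≠ 0 := by
      have := Nat.choose_pos (show k ≤ l.length + 1 by omega)
      positivity
    have hc2 : ((l.length).choose k : ℝ) ≠ 0 := by
      have := Nat.choose_pos hk
      positivity
    rw [Hmean, Hmean, div_eq_div_iff hc1 hc2]
    have hNe : ((l.length : ℝ) + 1) ≠ 0 := by positivity
    apply mul_left_cancel₀ hNe
    linear_combination esymm lam k * hcast - (((l.length + 1).choose k : ℕ) : ℝ) * hek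
  · intro hpos j
    have hqeq : q = ∑ i, ∏ jj ∈ Finset.univ.erase i, (X + C (lam jj)) := by
      rw [hq, hp, Finset.prod_eq_multiset_prod, derivative_prod, Finset.sum_eq_multiset_sum]
      congr 1
      refine Multiset.map_congr rfl fun i _ => ?_
      have hder : derivative (X + C (lam i)) = 1 := by
        rw [derivative_add, derivative_X, derivative_C, add_zero]
      rw [hder, mul_one, Finset.prod_eq_multiset_prod, Finset.erase_val]
    by_contra hle
    push_neg at hle
    have hrho : (0 : ℝ) ≤ - mu j := by
      simpa using hle
    have hroot : - mu j ∈ q.roots := by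
      rw [hlist]
      have : - mu j = l.get j := by rw [hmu]; simp
      rw [this]
      exact Multiset.mem_coe.2 (l.get_mem _)
    have hz : q.eval (- mu j) = 0 := (mem_roots hq0).1 hroot
    have hgt : 0 < q.eval (- mu j) := by
      rw [hqeq]
      rw [eval_finset_sum]
      refine Finset.sum_pos (fun i _ => ?_) Finset.univ_nonempty
      rw [eval_prod]
      refine Finset.prod_pos fun jj _ => ?_
      rw [eval_add, eval_X, eval_C]
      have := hpos jj
      linarith
    rw [hz] at hgt
    exact lt_irrefl 0 hgt


open Finset

lemma esymm_inv_mul {n : ℕ} (lam : Fin n → ℝ) (h0 : ∀ i, lam i ≠ 0) {k : ℕ} (hk : k ≤ n) :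
    esymm (fun i => (lam i)⁻¹) k * ∏ i, lam i = esymm lam (n - k) := by
  classical
  rw [esymm, esymm, Finset.sum_mul]
  refine Finset.sum_nbij' (fun t => tᶜ) (fun t => tᶜ) ?_ ?_ ?_ ?_ ?_
  · intro t ht
    rw [Finset.mem_powersetCard_univ] at ht ⊢
    rw [Finset.card_compl, ht, Fintype.card_fin]
  · intro t ht
    rw [Finset.mem_powersetCard_univ] at ht ⊢
    rw [Finset.card_compl, ht, Fintype.card_fin, Nat.sub_sub_self hk]
  · intro t _; exact compl_compl t
  · intro t _; exact compl_compl t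
  · intro t ht
    have hprod : ∏ i ∈ t, lam i ≠ 0 := Finset.prod_ne_zero_iff.2 fun i _ => h0 i
    have hsplit : (∏ i ∈ t, lam i) * ∏ i ∈ tᶜ, lam i = ∏ i, lam i :=
      Finset.prod_mul_prod_compl t lam
    rw [Finset.prod_inv_distrib, ← hsplit, inv_mul_cancel_left₀ hprod]

lemma top_le {k : ℕ} (lam : Fin (k + 2) → ℝ) :
    Hmean lam k * Hmean lam (k + 2) ≤ Hmean lam (k + 1) ^ 2 := by
  by_cases h0 : ∀ i, lam i ≠ 0
  · have hP : (∏ i, lam i) ≠ 0 := Finset.prod_ne_zero_iff.2 fun i _ => h0 i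
    set x : Fin (k + 2) → ℝ := fun i => (lam i)⁻¹ with hx
    have h2 : esymm x 2 * ∏ i, lam i = esymm lam k := by
      have := esymm_inv_mul lam h0 (show 2 ≤ k + 2 by omega)
      simpa using this
    have h1 : esymm x 1 * ∏ i, lam i = esymm lam (k + 1) := by
      have := esymm_inv_mul lam h0 (show 1 ≤ k + 2 by omega)
      simpa using this
    have hchoose : (((k + 2).choose k : ℕ) : ℝ) = (((k + 2).choose 2 : ℕ) : ℝ) := by
      norm_cast
      conv_lhs => rw [show k = (k + 2) - 2 by omega]
      exact Nat.choose_symm (by omega)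
    have hCk1 : (((k + 2).choose (k + 1) : ℕ) : ℝ) = (((k+2).choose 1 : ℕ) : ℝ) := by
      norm_cast
      conv_lhs => rw [show k + 1 = (k + 2) - 1 by omega]
      exact Nat.choose_symm (by omega)
    have e1 : Hmean lam k * Hmean lam (k + 2) = (∏ i, lam i) ^ 2 * Hmean x 2 := by
      simp only [Hmean]
      rw [hchoose, ← h2, esymm_top, Nat.choose_self]
      push_cast
      ring
    have e2 : Hmean lam (k + 1) ^ 2 = (∏ i, lam i) ^ 2 * Hmean x 1 ^ 2 := by
      simp only [Hmean]
      rw [hCk1, ← h1]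
      ring
    rw [e1, e2]
    have hv := var_le (show 2 ≤ k + 2 by omega) x
    nlinarith [sq_nonneg (∏ i, lam i)]
  · push_neg at h0
    obtain ⟨i, hi⟩ := h0
    have htop : Hmean lam (k + 2) = 0 := by
      rw [Hmean, esymm_top, Finset.prod_eq_zero (Finset.mem_univ i) hi]
      simp
    rw [htop, mul_zero]
    exact sq_nonneg _

lemma top_lt {k : ℕ} (lam : Fin (k + 2) → ℝ) (hpos : ∀ i, 0 < lam i)
    (hne : ¬ ∀ i j, lam i = lam j) :
    Hmean lam k * Hmean lam (k + 2) < Hmean lam (k + 1) ^ 2 := by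
  have h0 : ∀ i, lam i ≠ 0 := fun i => (hpos i).ne'
  have hP : (∏ i, lam i) ≠ 0 := Finset.prod_ne_zero_iff.2 fun i _ => h0 i
  set x : Fin (k + 2) → ℝ := fun i => (lam i)⁻¹ with hx
  have h2 : esymm x 2 * ∏ i, lam i = esymm lam k := by
    have := esymm_inv_mul lam h0 (show 2 ≤ k + 2 by omega)
    simpa using this
  have h1 : esymm x 1 * ∏ i, lam i = esymm lam (k + 1) := by
    have := esymm_inv_mul lam h0 (show 1 ≤ k + 2 by omega)
    simpa using this
  have hchoose : (((k + 2).choose k : ℕ) : ℝ) = (((k + 2).choose 2 : ℕ) : ℝ) := by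
    norm_cast
    conv_lhs => rw [show k = (k + 2) - 2 by omega]
    exact Nat.choose_symm (by omega)
  have hCk1 : (((k + 2).choose (k + 1) : ℕ) : ℝ) = (((k+2).choose 1 : ℕ) : ℝ) := by
    norm_cast
    conv_lhs => rw [show k + 1 = (k + 2) - 1 by omega]
    exact Nat.choose_symm (by omega)
  have e1 : Hmean lam k * Hmean lam (k + 2) = (∏ i, lam i) ^ 2 * Hmean x 2 := by
    simp only [Hmean]
    rw [hchoose, ← h2, esymm_top, Nat.choose_self]
    push_cast
    ring
  have e2 : Hmean lam (k + 1) ^ 2 = (∏ i, lam i) ^ 2 * Hmean x 1 ^ 2 := by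
    simp only [Hmean]
    rw [hCk1, ← h1]
    ring
  rw [e1, e2]
  have hxne : ¬ ∀ i j, x i = x j := by
    intro hall
    exact hne fun i j => inv_injective (hall i j)
  have hv := var_lt (show 2 ≤ k + 2 by omega) x hxne
  have hP2 : 0 < (∏ i, lam i) ^ 2 :=
    lt_of_le_of_ne (sq_nonneg _) (Ne.symm (pow_ne_zero 2 hP))
  exact mul_lt_mul_of_pos_left hv hP2


lemma newton_le : ∀ (n : ℕ) (lam : Fin n → ℝ) (s : ℕ), s + 2 ≤ n →
    Hmean lam s * Hmean lam (s + 2) ≤ Hmean lam (s + 1) ^ 2 := by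
  intro n
  induction n with
  | zero => intro lam s hs; omega
  | succ m ih =>
    intro lam s hs
    rcases eq_or_lt_of_le hs with heq | hlt
    · have hm : m = s + 1 := by omega
      subst hm
      exact top_le lam
    · obtain ⟨mu, hH, _⟩ := exists_deriv_reduce lam
      rw [hH s (by omega), hH (s + 2) (by omega), hH (s + 1) (by omega)]
      exact ih mu s (by omega)

lemma newton_lt : ∀ (n : ℕ) (lam : Fin n → ℝ) (s : ℕ), s + 2 ≤ n →
    (∀ i, 0 < lam i) → ¬ (∀ i j, lam i = lam j) →
    Hmean lam s * Hmean lam (s + 2) < Hmean lam (s + 1) ^ 2 := by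
  intro n
  induction n with
  | zero => intro lam s hs; omega
  | succ m ih =>
    intro lam s hs hpos hne
    rcases eq_or_lt_of_le hs with heq | hlt
    · have hm : m = s + 1 := by omega
      subst hm
      exact top_lt lam hpos hne
    · obtain ⟨mu, hH, hmupos⟩ := exists_deriv_reduce lam
      have hm2 : 2 ≤ m := by omega
      have hmune : ¬ ∀ i j, mu i = mu j := by
        intro hall
        apply hne
        refine (var_eq_iff (show 2 ≤ m + 1 by omega) lam).1 ?_
        rw [hH 1 (by omega), hH 2 (by omega)]
        exact (var_eq_iff hm2 mu).2 hall
      rw [hH s (by omega), hH (s + 2) (by omega), hH (s + 1) (by omega)]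
      exact ih mu s (by omega) (hmupos hpos) hmune

lemma Hmean_const {n : ℕ} (lam : Fin n → ℝ) (c : ℝ) (hall : ∀ i, lam i = c)
    {k : ℕ} (hk : k ≤ n) : Hmean lam k = c ^ k := by
  rw [Hmean, esymm]
  have h : ∀ t ∈ Finset.powersetCard k (Finset.univ : Finset (Fin n)),
      ∏ i ∈ t, lam i = c ^ k := by
    intro t ht
    rw [Finset.mem_powersetCard] at ht
    rw [Finset.prod_congr rfl fun i _ => hall i, Finset.prod_const, ht.2]
  rw [Finset.sum_congr rfl h, Finset.sum_const, Finset.card_powersetCard,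
    Finset.card_univ, Fintype.card_fin, nsmul_eq_mul]
  have hc : ((n.choose k : ℕ) : ℝ) ≠ 0 := by
    have := Nat.choose_pos hk
    positivity
  field_simp


/-- Newton's inequality `H_r² ≥ H_{r−1}H_{r+1}` for `1 ≤ r ≤ n−1`; for positive
`λᵢ` equality holds iff all the `λᵢ` are equal. -/
theorem stmt_13 {n : ℕ} (lam : Fin n → ℝ)
    (r : ℕ) (hr1 : 1 ≤ r) (hr2 : r ≤ n - 1) :
    Hmean lam (r - 1) * Hmean lam (r + 1) ≤ Hmean lam r ^ 2 ∧
      ((∀ i, 0 < lam i) →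
        (Hmean lam r ^ 2 = Hmean lam (r - 1) * Hmean lam (r + 1) ↔
          ∀ i j, lam i = lam j)) := by
  have hn : r + 1 ≤ n := by omega
  obtain ⟨s, rfl⟩ : ∃ s, r = s + 1 := ⟨r - 1, by omega⟩
  simp only [Nat.add_sub_cancel]
  constructor
  · exact newton_le n lam s (by omega)
  · intro hpos
    constructor
    · intro heq
      by_contra hne
      exact absurd heq (ne_of_gt (newton_lt n lam s (by omega) hpos hne))
    · intro hall
      have hn1 : 0 < n := by omega
      set c : ℝ := lam ⟨0, hn1⟩ with hc
      have hallc : ∀ i, lam i = c := fun i => hall i _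
      rw [Hmean_const lam c hallc (show s ≤ n by omega),
        Hmean_const lam c hallc (show s + 1 ≤ n by omega),
        Hmean_const lam c hallc (show s + 2 ≤ n by omega)]
      ring
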